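/- arXiv:1707.04521 — 2 statements merged into one kernel-verified Lean document; each statement's English description precedes it below -/
import Mathlib

section
/- Let W : ℝ^{3×3} → ℝ be differentiable and frame indifferent, i.e. W(RF) = W(F) for all F ∈ ℝ^{3×3} and all R ∈ SO(3). Then for every F ∈ ℝ^{3×3} the matrix DW(F)·Fᵀ is symmetric. -/
open Matrix

abbrev M3 := Matrix (Fin 3) (Fin 3) ℝ

def SO3 (R : M3) : Prop := Rᵀ * R = 1 ∧ R.det = 1

attribute [local instance] Matrix.normedAddCommGroup Matrix.normedSpace

/-- The derivative of `W` at `F`, identified with a matrix via `DW(F) : H = d/dt|₀ W(F + tH)`. -/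
noncomputable def matDeriv (W : M3 → ℝ) (F : M3) : M3 :=
  fun i j => fderiv ℝ W F (Matrix.single i j 1)

section Aux

open Real

set_option linter.unreachableTactic false
set_option linter.unnecessarySeqFocus false
set_option linter.unusedTactic false

/-- A curve in SO(3) through the identity with velocity `A` forces `DW(F) : A·F = 0`. -/
lemma aux_key (W : M3 → ℝ) (hW : Differentiable ℝ W)
    (hframe : ∀ (R F : M3), SO3 R → W (R * F) = W F) (F : M3)
    (R : ℝ → M3) (hR : ∀ t, SO3 (R t)) (hR0 : R 0 = 1) (A : M3)
    (hA : HasDerivAt R A 0) : fderiv ℝ W F (A * F) = 0 := by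
  have hmul : HasDerivAt (fun t => R t * F) (A * F) 0 := by
    have hc := ((LinearMap.mulRight ℝ F : M3 →ₗ[ℝ] M3).toContinuousLinearMap.hasFDerivAt
      (x := R 0)).comp_hasDerivAt 0 hA
    exact hc
  have hcomp : HasDerivAt (fun t => W (R t * F)) (fderiv ℝ W F (A * F)) 0 := by
    have := (hW (R 0 * F)).hasFDerivAt.comp_hasDerivAt 0 hmul
    rw [hR0, one_mul] at this
    exact this
  have hconst : (fun t => W (R t * F)) = fun _ => W F := by
    funext t; exact hframe (R t) F (hR t)
  rw [hconst] at hcomp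
  exact hcomp.unique (hasDerivAt_const 0 (W F))

lemma aux_so3_01 (t : ℝ) : SO3 !![cos t, -sin t, 0; sin t, cos t, 0; 0, 0, 1] := by
  have ht : (!![cos t, -sin t, 0; sin t, cos t, 0; 0, 0, 1] : M3)ᵀ
      = !![cos t, sin t, 0; -sin t, cos t, 0; 0, 0, 1] := by
    ext i j; fin_cases i <;> fin_cases j <;> rfl
  constructor
  · rw [ht, Matrix.mul_fin_three, Matrix.one_fin_three]
    congr 1 <;> ring_nf <;> simp [sin_sq_add_cos_sq, cos_sq_add_sin_sq] <;> ring
  · simp [Matrix.det_fin_three, ← sq, cos_sq_add_sin_sq]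

lemma aux_so3_02 (t : ℝ) : SO3 !![cos t, 0, -sin t; 0, 1, 0; sin t, 0, cos t] := by
  have ht : (!![cos t, 0, -sin t; 0, 1, 0; sin t, 0, cos t] : M3)ᵀ
      = !![cos t, 0, sin t; 0, 1, 0; -sin t, 0, cos t] := by
    ext i j; fin_cases i <;> fin_cases j <;> rfl
  constructor
  · rw [ht, Matrix.mul_fin_three, Matrix.one_fin_three]
    congr 1 <;> ring_nf <;> simp [sin_sq_add_cos_sq, cos_sq_add_sin_sq] <;> ring
  · simp [Matrix.det_fin_three, ← sq, cos_sq_add_sin_sq]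

lemma aux_so3_12 (t : ℝ) : SO3 !![1, 0, 0; 0, cos t, -sin t; 0, sin t, cos t] := by
  have ht : (!![1, 0, 0; 0, cos t, -sin t; 0, sin t, cos t] : M3)ᵀ
      = !![1, 0, 0; 0, cos t, sin t; 0, -sin t, cos t] := by
    ext i j; fin_cases i <;> fin_cases j <;> rfl
  constructor
  · rw [ht, Matrix.mul_fin_three, Matrix.one_fin_three]
    congr 1 <;> ring_nf <;> simp [sin_sq_add_cos_sq, cos_sq_add_sin_sq] <;> ring
  · simp [Matrix.det_fin_three, ← sq, cos_sq_add_sin_sq]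

lemma aux_hd_01 : HasDerivAt (fun t : ℝ => (!![cos t, -sin t, 0; sin t, cos t, 0; 0, 0, 1] : M3))
    !![0, -1, 0; 1, 0, 0; 0, 0, 0] 0 := by
  refine hasDerivAt_pi.2 ?_; intro i; rw [hasDerivAt_pi]; intro j
  fin_cases i <;> fin_cases j <;> simp <;>
  first
    | simpa using (Real.hasDerivAt_cos 0)
    | simpa using (Real.hasDerivAt_sin 0)
    | simpa using ((Real.hasDerivAt_sin 0).fun_neg)
    | exact hasDerivAt_const (𝕜 := ℝ) _ _

lemma aux_hd_02 : HasDerivAt (fun t : ℝ => (!![cos t, 0, -sin t; 0, 1, 0; sin t, 0, cos t] : M3))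
    !![0, 0, -1; 0, 0, 0; 1, 0, 0] 0 := by
  refine hasDerivAt_pi.2 ?_; intro i; rw [hasDerivAt_pi]; intro j
  fin_cases i <;> fin_cases j <;> simp <;>
  first
    | simpa using (Real.hasDerivAt_cos 0)
    | simpa using (Real.hasDerivAt_sin 0)
    | simpa using ((Real.hasDerivAt_sin 0).fun_neg)
    | exact hasDerivAt_const (𝕜 := ℝ) _ _

lemma aux_hd_12 : HasDerivAt (fun t : ℝ => (!![1, 0, 0; 0, cos t, -sin t; 0, sin t, cos t] : M3))
    !![0, 0, 0; 0, 0, -1; 0, 1, 0] 0 := by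
  refine hasDerivAt_pi.2 ?_; intro i; rw [hasDerivAt_pi]; intro j
  fin_cases i <;> fin_cases j <;> simp <;>
  first
    | simpa using (Real.hasDerivAt_cos 0)
    | simpa using (Real.hasDerivAt_sin 0)
    | simpa using ((Real.hasDerivAt_sin 0).fun_neg)
    | exact hasDerivAt_const (𝕜 := ℝ) _ _

lemma aux_entry (W : M3 → ℝ) (F : M3) (i j : Fin 3) :
    (matDeriv W F * Fᵀ) i j = fderiv ℝ W F (Matrix.single i j 1 * F) := by
  have h : Matrix.single i j 1 * F = ∑ k, F j k • Matrix.single i k 1 := by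
    ext a b
    simp only [Matrix.mul_apply, Matrix.single, Matrix.sum_apply, Matrix.smul_apply,
      Matrix.of_apply, smul_eq_mul, mul_ite, mul_one, mul_zero, ite_and]
    by_cases hai : i = a <;> simp [hai]
  rw [h, map_sum]
  simp only [_root_.map_smul]
  simp [Matrix.mul_apply, matDeriv, Matrix.transpose_apply, smul_eq_mul, mul_comm]

end Aux

/-- If `W : ℝ^{3×3} → ℝ` is differentiable and frame indifferent,
then `DW(F)·Fᵀ` is symmetric for every `F`. -/
theorem frame_indifferent_stress_symmetric (W : M3 → ℝ) (hW : Differentiable ℝ W)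
    (hframe : ∀ (R F : M3), SO3 R → W (R * F) = W F) (F : M3) :
    (matDeriv W F * Fᵀ)ᵀ = matDeriv W F * Fᵀ := by
  have h01 := aux_key W hW hframe F _ aux_so3_01
    (by ext a b; fin_cases a <;> fin_cases b <;>
      simp [Matrix.one_apply, Matrix.vecHead, Matrix.vecTail]) _ aux_hd_01
  have h02 := aux_key W hW hframe F _ aux_so3_02
    (by ext a b; fin_cases a <;> fin_cases b <;>
      simp [Matrix.one_apply, Matrix.vecHead, Matrix.vecTail]) _ aux_hd_02
  have h12 := aux_key W hW hframe F _ aux_so3_12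
    (by ext a b; fin_cases a <;> fin_cases b <;>
      simp [Matrix.one_apply, Matrix.vecHead, Matrix.vecTail]) _ aux_hd_12
  have key : ∀ a b : Fin 3,
      fderiv ℝ W F (Matrix.single a b 1 * F)
        = fderiv ℝ W F (Matrix.single b a 1 * F) := by
    have e01 : (!![0, -1, 0; 1, 0, 0; 0, 0, 0] : M3)
        = Matrix.single 1 0 1 - Matrix.single 0 1 1 := by
      ext a b; fin_cases a <;> fin_cases b <;>
        simp [Matrix.single, Matrix.sub_apply, Matrix.vecHead, Matrix.vecTail]
    have e02 : (!![0, 0, -1; 0, 0, 0; 1, 0, 0] : M3)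
        = Matrix.single 2 0 1 - Matrix.single 0 2 1 := by
      ext a b; fin_cases a <;> fin_cases b <;>
        simp [Matrix.single, Matrix.sub_apply, Matrix.vecHead, Matrix.vecTail]
    have e12 : (!![0, 0, 0; 0, 0, -1; 0, 1, 0] : M3)
        = Matrix.single 2 1 1 - Matrix.single 1 2 1 := by
      ext a b; fin_cases a <;> fin_cases b <;>
        simp [Matrix.single, Matrix.sub_apply, Matrix.vecHead, Matrix.vecTail]
    rw [e01, sub_mul, map_sub, sub_eq_zero] at h01
    rw [e02, sub_mul, map_sub, sub_eq_zero] at h02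
    rw [e12, sub_mul, map_sub, sub_eq_zero] at h12
    intro a b
    fin_cases a <;> fin_cases b <;>
      first
        | rfl
        | exact h01 | exact h01.symm
        | exact h02 | exact h02.symm
        | exact h12 | exact h12.symm
  ext i j
  rw [Matrix.transpose_apply, aux_entry, aux_entry, key]
end

section
/- Suppose W : ℝ^{3×3} → [0,∞) is differentiable, satisfies the local upper bound W(F) ≤ β' dist²(F, SO(3)) for all F with dist(F, SO(3)) ≤ ρ (for some ρ, β' > 0), and has linear stress growth |DW(F)| ≤ M(|F|+1) for all F. Then there exists β > 0 such that W(F) ≤ β dist²(F, SO(3)) for all F ∈ ℝ^{3×3}. -/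
open Matrix

noncomputable def frob (A : M3) : ℝ := Real.sqrt (∑ i, ∑ j, (A i j) ^ 2)

/-- `dist(F, SO(3)) = inf_{R ∈ SO(3)} |F − R|` in the Frobenius norm. -/
noncomputable def distSO (F : M3) : ℝ := sInf ((fun R => frob (F - R)) '' {R | SO3 R})

attribute [local instance] Matrix.normedAddCommGroup Matrix.normedSpace

/- ### auxiliary machinery -/

noncomputable def emb (A : M3) : EuclideanSpace ℝ (Fin 3 × Fin 3) :=
  WithLp.toLp 2 (fun p : Fin 3 × Fin 3 => A p.1 p.2)

lemma frob_eq (A : M3) : frob A = ‖emb A‖ := by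
  rw [EuclideanSpace.norm_eq]
  simp [frob, Fintype.sum_prod_type, emb, Real.norm_eq_abs, sq_abs]

lemma emb_sub (A B : M3) : emb (A - B) = emb A - emb B := WithLp.toLp_sub 2 _ _

lemma frob_nonneg (A : M3) : 0 ≤ frob A := Real.sqrt_nonneg _

lemma frob_sub_le (A B C : M3) : frob (A - C) ≤ frob (A - B) + frob (B - C) := by
  rw [frob_eq, frob_eq, frob_eq, emb_sub, emb_sub, emb_sub]
  exact norm_sub_le_norm_sub_add_norm_sub _ _ _

lemma frob_one : frob (1 : M3) = Real.sqrt 3 := by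
  have : ∑ i, ∑ j, ((1 : M3) i j) ^ 2 = 3 := by
    simp [Matrix.one_apply, Fin.sum_univ_succ]
  rw [frob, this]

lemma frob_SO3 {R : M3} (hR : SO3 R) : frob R = Real.sqrt 3 := by
  have h : ∑ i, ∑ j, (R i j) ^ 2 = 3 := by
    rw [Finset.sum_comm]
    have : ∀ j, ∑ i, (R i j) ^ 2 = 1 := by
      intro j
      have := congrArg (fun A : M3 => A j j) hR.1
      simp only [Matrix.mul_apply, Matrix.transpose_apply, Matrix.one_apply_eq] at this
      simpa [pow_two] using this
    simp [this]
  rw [frob, h]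

lemma sqrt3_le_two : Real.sqrt 3 ≤ 2 := by
  rw [show (2:ℝ) = Real.sqrt 4 by rw [show (4:ℝ) = 2^2 by norm_num, Real.sqrt_sq]; norm_num]
  exact Real.sqrt_le_sqrt (by norm_num)

lemma SO3_one : SO3 (1 : M3) := ⟨by simp, by simp⟩

lemma distSO_set_nonempty (F : M3) : ((fun R => frob (F - R)) '' {R | SO3 R}).Nonempty :=
  ⟨frob (F - 1), ⟨1, SO3_one, rfl⟩⟩

lemma distSO_nonneg (F : M3) : 0 ≤ distSO F :=
  le_csInf (distSO_set_nonempty F) (by rintro _ ⟨R, hR, rfl⟩; exact frob_nonneg _)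

lemma distSO_le (F : M3) : distSO F ≤ frob (F - 1) :=
  csInf_le ⟨0, by rintro _ ⟨R, hR, rfl⟩; exact frob_nonneg _⟩ ⟨1, SO3_one, rfl⟩

lemma distSO_lower (F : M3) : frob (F - 1) - 2 * Real.sqrt 3 ≤ distSO F := by
  apply le_csInf (distSO_set_nonempty F)
  rintro _ ⟨R, hR, rfl⟩
  have h1 : frob (F - 1) ≤ frob (F - R) + frob (R - 1) := frob_sub_le F R 1
  have h2 : frob (R - 1) ≤ frob (R - 0) + frob (0 - 1) := frob_sub_le R 0 1
  have h3 : frob (R - 0) = Real.sqrt 3 := by rw [sub_zero, frob_SO3 hR]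
  have h4 : frob (0 - 1) = Real.sqrt 3 := by
    rw [zero_sub]
    have : frob (-1 : M3) = frob (1 : M3) := by
      simp [frob]
    rw [this, frob_one]
  linarith

lemma fderiv_apply_eq (W : M3 → ℝ) (hW : Differentiable ℝ W) (F H : M3) :
    fderiv ℝ W F H = ∑ i, ∑ j, H i j * matDeriv W F i j := by
  conv_lhs => rw [Matrix.matrix_eq_sum_single H]
  rw [map_sum]
  refine Finset.sum_congr rfl fun i _ => ?_
  rw [map_sum]
  refine Finset.sum_congr rfl fun j _ => ?_
  have : Matrix.single i j (H i j) = H i j • Matrix.single i j (1:ℝ) := by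
    rw [Matrix.smul_single, smul_eq_mul, mul_one]
  rw [this, ContinuousLinearMap.map_smul, smul_eq_mul, matDeriv]

lemma abs_fderiv_apply_le (W : M3 → ℝ) (hW : Differentiable ℝ W) (F H : M3) :
    |fderiv ℝ W F H| ≤ frob (matDeriv W F) * frob H := by
  rw [fderiv_apply_eq W hW]
  have : ∑ i, ∑ j, H i j * matDeriv W F i j = inner ℝ (emb H) (emb (matDeriv W F)) := by
    rw [PiLp.inner_apply, Fintype.sum_prod_type]
    simp [emb, RCLike.inner_apply, mul_comm]
  rw [this, frob_eq, frob_eq, mul_comm]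
  exact abs_real_inner_le_norm _ _

lemma frob_le_three (H : M3) : frob H ≤ 3 * ‖H‖ := by
  have h1 : ∑ i, ∑ j, (H i j) ^ 2 ≤ ∑ (_ : Fin 3), ∑ (_ : Fin 3), ‖H‖ ^ 2 := by
    refine Finset.sum_le_sum fun i _ => Finset.sum_le_sum fun j _ => ?_
    have := Matrix.norm_entry_le_entrywise_sup_norm H (i := i) (j := j)
    calc (H i j)^2 = ‖H i j‖^2 := by rw [Real.norm_eq_abs, sq_abs]
    _ ≤ ‖H‖^2 := by apply pow_le_pow_left₀ (norm_nonneg _) this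
  have h2 : ∑ (_ : Fin 3), ∑ (_ : Fin 3), ‖H‖ ^ 2 = (3 * ‖H‖)^2 := by
    simp; ring
  calc frob H ≤ Real.sqrt ((3 * ‖H‖)^2) := by rw [← h2]; exact Real.sqrt_le_sqrt h1
  _ = 3 * ‖H‖ := Real.sqrt_sq (by positivity)

lemma norm_le_frob (H : M3) : ‖H‖ ≤ frob H := by
  rw [Matrix.norm_le_iff (frob_nonneg H)]
  intro i j
  rw [Real.norm_eq_abs, ← Real.sqrt_sq_eq_abs]
  apply Real.sqrt_le_sqrt
  calc (H i j)^2 ≤ ∑ j', (H i j') ^ 2 :=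
        Finset.single_le_sum (f := fun j' => (H i j')^2) (fun _ _ => sq_nonneg _) (Finset.mem_univ j)
  _ ≤ ∑ i', ∑ j', (H i' j') ^ 2 :=
        Finset.single_le_sum (f := fun i' => ∑ j', (H i' j')^2)
          (fun _ _ => Finset.sum_nonneg fun _ _ => sq_nonneg _) (Finset.mem_univ i)

lemma opnorm_le (W : M3 → ℝ) (hW : Differentiable ℝ W) (F : M3) :
    @norm _ (ContinuousLinearMap.hasOpNorm (𝕜 := ℝ) (𝕜₂ := ℝ) (E := M3) (F := ℝ) (σ₁₂ := RingHom.id ℝ)) (fderiv ℝ W F) ≤ 3 * frob (matDeriv W F) := by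
  apply ContinuousLinearMap.opNorm_le_bound _ (by linarith [frob_nonneg (matDeriv W F)])
  intro H
  calc ‖fderiv ℝ W F H‖ = |fderiv ℝ W F H| := rfl
  _ ≤ frob (matDeriv W F) * frob H := abs_fderiv_apply_le W hW F H
  _ ≤ frob (matDeriv W F) * (3 * ‖H‖) :=
      mul_le_mul_of_nonneg_left (frob_le_three H) (frob_nonneg _)
  _ = 3 * frob (matDeriv W F) * ‖H‖ := by ring

/-- A differentiable nonnegative `W` with a local quadratic upper bound near
`SO(3)` and linear stress growth satisfies a global quadratic upper bound
`W(F) ≤ β dist²(F, SO(3))`. -/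
theorem global_quadratic_bound (W : M3 → ℝ) (hW : Differentiable ℝ W)
    (hnonneg : ∀ F, 0 ≤ W F)
    (ρ β' M : ℝ) (hρ : 0 < ρ) (hβ' : 0 < β') (hM : 0 < M)
    (hlocal : ∀ F, distSO F ≤ ρ → W F ≤ β' * distSO F ^ 2)
    (hgrowth : ∀ F, frob (matDeriv W F) ≤ M * (frob F + 1)) :
    ∃ β > 0, ∀ F, W F ≤ β * distSO F ^ 2 := by
  set K : ℝ := 1 + 4 / ρ with hK
  have hKpos : 0 < K := by positivity
  refine ⟨β' + 3 * M * (3 * K + 13 / ρ) * K, by positivity, fun F => ?_⟩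
  set d := distSO F with hd
  have hd0 : 0 ≤ d := distSO_nonneg F
  have hC2 : 0 ≤ 3 * M * (3 * K + 13 / ρ) * K := by positivity
  by_cases hcase : d ≤ ρ
  · have := hlocal F hcase
    nlinarith [sq_nonneg d]
  · push_neg at hcase
    -- far field: W F ≤ 3M(3 s₀ + 13) s₀ with s₀ = frob (F-1)
    set s₀ := frob (F - 1) with hs₀
    have hs₀0 : 0 ≤ s₀ := frob_nonneg _
    -- W 1 = 0
    have hW1 : W 1 = 0 := by
      have h1 : distSO 1 = 0 := by
        have hle : distSO 1 ≤ 0 := by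
          have := distSO_le 1
          simpa [frob] using this
        exact le_antisymm hle (distSO_nonneg 1)
      have := hlocal 1 (by rw [h1]; exact hρ.le)
      rw [h1] at this
      exact le_antisymm (by simpa using this) (hnonneg 1)
    -- MVT
    have hFnorm : ‖F‖ ≤ s₀ + 2 := by
      have h1 : ‖F‖ ≤ ‖F - 1‖ + ‖(1:M3)‖ := by
        calc ‖F‖ = ‖F - 1 + 1‖ := by rw [sub_add_cancel]
        _ ≤ ‖F - 1‖ + ‖(1:M3)‖ := norm_add_le _ _
      have h2 : ‖F - 1‖ ≤ s₀ := norm_le_frob _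
      have h3 : ‖(1:M3)‖ ≤ 2 := le_trans (le_trans (norm_le_frob _) frob_one.le) sqrt3_le_two
      linarith
    set C : ℝ := 3 * (M * (3 * (s₀ + 2) + 1)) with hC
    have hCpos : 0 ≤ C := by positivity
    have hbound : ∀ x ∈ Metric.closedBall (0:M3) (s₀ + 2), @norm _ (ContinuousLinearMap.hasOpNorm (𝕜 := ℝ) (𝕜₂ := ℝ) (E := M3) (F := ℝ) (σ₁₂ := RingHom.id ℝ)) (fderiv ℝ W x) ≤ C := by
      intro x hx
      have hxnorm : ‖x‖ ≤ s₀ + 2 := by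
        have := Metric.mem_closedBall.mp hx
        simpa [dist_eq_norm] using this
      calc @norm _ (ContinuousLinearMap.hasOpNorm (𝕜 := ℝ) (𝕜₂ := ℝ) (E := M3) (F := ℝ) (σ₁₂ := RingHom.id ℝ)) (fderiv ℝ W x) ≤ 3 * frob (matDeriv W x) := opnorm_le W hW x
      _ ≤ 3 * (M * (frob x + 1)) := by
          have := hgrowth x
          linarith
      _ ≤ C := by
          have hfx : frob x ≤ 3 * ‖x‖ := frob_le_three x
          have hnx : 0 ≤ ‖x‖ := norm_nonneg x
          have : frob x ≤ 3 * (s₀ + 2) := by nlinarith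
          rw [hC]; nlinarith
    have h1mem : (1:M3) ∈ Metric.closedBall (0:M3) (s₀ + 2) := by
      rw [Metric.mem_closedBall, dist_eq_norm, sub_zero]
      have h3 : ‖(1:M3)‖ ≤ 2 := le_trans (le_trans (norm_le_frob _) frob_one.le) sqrt3_le_two
      linarith
    have hFmem : F ∈ Metric.closedBall (0:M3) (s₀ + 2) := by
      rw [Metric.mem_closedBall, dist_eq_norm, sub_zero]
      linarith
    have hmvt : ‖W F - W 1‖ ≤ C * ‖F - 1‖ :=
      Convex.norm_image_sub_le_of_norm_fderiv_le (fun x _ => hW x) hbound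
        (convex_closedBall (0:M3) (s₀ + 2)) h1mem hFmem
    have hWF : W F ≤ C * s₀ := by
      rw [hW1, sub_zero, Real.norm_eq_abs] at hmvt
      have h1 : ‖F - 1‖ ≤ s₀ := norm_le_frob _
      have h2 : W F ≤ |W F| := le_abs_self _
      have h3 : C * ‖F - 1‖ ≤ C * s₀ := mul_le_mul_of_nonneg_left h1 hCpos
      linarith
    -- relate s₀ to d
    have hds : d ≤ s₀ := distSO_le F
    have hrd : ρ ≤ d := hcase.le
    have hdiv : 1 ≤ d / ρ := (one_le_div hρ).mpr hrd
    have hKd : K * d = d + 4 * (d / ρ) := by rw [hK]; ring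
    have hsd : s₀ ≤ K * d := by
      have h1 := distSO_lower F
      have h2 : 2 * Real.sqrt 3 ≤ 4 := by linarith [sqrt3_le_two]
      rw [hKd]
      have : (4:ℝ) ≤ 4 * (d / ρ) := by linarith
      have hd' : frob (F - 1) - 2 * Real.sqrt 3 ≤ d := h1
      linarith
    have h7 : (7:ℝ) ≤ 13 / ρ * d := by
      have : 13 / ρ * d = 13 * (d / ρ) := by ring
      rw [this]; linarith
    have hfinal : C * s₀ ≤ 3 * M * (3 * K + 13 / ρ) * K * d ^ 2 := by
      have hC' : C = 3 * M * (3 * s₀ + 7) := by rw [hC]; ring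
      rw [hC']
      have hs7 : 3 * s₀ + 7 ≤ (3 * K + 13 / ρ) * d := by
        have hexp : (3 * K + 13 / ρ) * d = 3 * (K * d) + 13 / ρ * d := by ring
        rw [hexp]
        have h3s : 3 * s₀ ≤ 3 * (K * d) := by linarith
        exact add_le_add h3s h7
      have hkd0 : 0 ≤ (3 * K + 13 / ρ) * d := by positivity
      calc 3 * M * (3 * s₀ + 7) * s₀ ≤ 3 * M * ((3 * K + 13 / ρ) * d) * s₀ := by
            apply mul_le_mul_of_nonneg_right _ hs₀0
            apply mul_le_mul_of_nonneg_left hs7 (by positivity)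
      _ ≤ 3 * M * ((3 * K + 13 / ρ) * d) * (K * d) := by
            apply mul_le_mul_of_nonneg_left hsd
            positivity
      _ = 3 * M * (3 * K + 13 / ρ) * K * d ^ 2 := by ring
    have hb0 : 0 ≤ β' * d ^ 2 := by positivity
    calc W F ≤ C * s₀ := hWF
    _ ≤ 3 * M * (3 * K + 13 / ρ) * K * d ^ 2 := hfinal
    _ ≤ (β' + 3 * M * (3 * K + 13 / ρ) * K) * d ^ 2 := by nlinarith
end
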